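/- Let μ_n and σ_n be the posterior mean and standard deviation of a Gaussian process with kernel k at step n, and g ∈ H_k with ‖g‖_{H_k} ≤ R so that |μ_n(z) − g(z)| ≤ R σ_n(z) for all z. Let ξ_n = max_{i≤n} g(z_i), I_n(z) = max{0, g(z) − ξ_n}, and α_n^{EI}(z) = σ_n(z)·h((μ_n(z) − ξ_n)/σ_n(z)) where h(x) = xΦ(x) + φ(x). Then α_n^{EI}(z) ≤ I_n(z) + (R+1)σ_n(z). -/
import Mathlib


noncomputable def stdPdf (x : ℝ) : ℝ := (Real.sqrt (2 * Real.pi))⁻¹ * Real.exp (-x ^ 2 / 2)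

noncomputable def stdCdf (x : ℝ) : ℝ := ∫ t in Set.Iic x, stdPdf t

noncomputable def hEI (x : ℝ) : ℝ := x * stdCdf x + stdPdf x

lemma stdPdf_nonneg (x : ℝ) : 0 ≤ stdPdf x := by
  unfold stdPdf
  positivity

lemma sqrt_two_pi_ge_one : (1 : ℝ) ≤ Real.sqrt (2 * Real.pi) := by
  rw [show (1:ℝ) = Real.sqrt 1 by simp]
  apply Real.sqrt_le_sqrt
  nlinarith [Real.pi_gt_three]

lemma stdPdf_le_one (x : ℝ) : stdPdf x ≤ 1 := by
  unfold stdPdf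
  have h1 : Real.exp (-x ^ 2 / 2) ≤ 1 := by
    rw [Real.exp_le_one_iff]
    nlinarith [sq_nonneg x]
  have h2 : (Real.sqrt (2 * Real.pi))⁻¹ ≤ 1 := by
    rw [inv_le_one_iff₀]; right; exact sqrt_two_pi_ge_one
  calc (Real.sqrt (2 * Real.pi))⁻¹ * Real.exp (-x ^ 2 / 2)
      ≤ 1 * 1 := by
        apply mul_le_mul h2 h1 (Real.exp_nonneg _) zero_le_one
    _ = 1 := by ring

lemma integrable_stdPdf : MeasureTheory.Integrable stdPdf := by
  unfold stdPdf
  have : ∀ x : ℝ, -x ^ 2 / 2 = -(1/2 : ℝ) * x ^ 2 := by intro x; ring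
  simp_rw [this]
  exact (integrable_exp_neg_mul_sq (by norm_num : (0:ℝ) < 1/2)).const_mul _

lemma integral_stdPdf : (∫ x, stdPdf x) = 1 := by
  unfold stdPdf
  rw [MeasureTheory.integral_const_mul]
  have : ∀ x : ℝ, -x ^ 2 / 2 = -(1/2 : ℝ) * x ^ 2 := by intro x; ring
  simp_rw [this]
  rw [integral_gaussian (1/2 : ℝ)]
  have : Real.pi / (1/2) = 2 * Real.pi := by ring
  rw [this, inv_mul_cancel₀]
  positivity

lemma stdCdf_nonneg (x : ℝ) : 0 ≤ stdCdf x :=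
  MeasureTheory.setIntegral_nonneg measurableSet_Iic (fun t _ => stdPdf_nonneg t)

lemma stdCdf_le_one (x : ℝ) : stdCdf x ≤ 1 := by
  rw [← integral_stdPdf]
  exact MeasureTheory.setIntegral_le_integral integrable_stdPdf
    (Filter.Eventually.of_forall stdPdf_nonneg)

lemma hEI_le (x : ℝ) : hEI x ≤ max x 0 + 1 := by
  unfold hEI
  have h1 : x * stdCdf x ≤ max x 0 := by
    rcases le_or_gt 0 x with hx | hx
    · calc x * stdCdf x ≤ x * 1 := by
            apply mul_le_mul_of_nonneg_left (stdCdf_le_one x) hx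
        _ = x := by ring
        _ ≤ max x 0 := le_max_left _ _
    · have : x * stdCdf x ≤ 0 := mul_nonpos_of_nonpos_of_nonneg hx.le (stdCdf_nonneg x)
      exact this.trans (le_max_right _ _)
  linarith [stdPdf_le_one x]

theorem EI_upper_bound {Z : Type*} (g μ σ : Z → ℝ) (R : ℝ) (hR : 0 ≤ R)
    (herr : ∀ w, |μ w - g w| ≤ R * σ w)
    (n : ℕ) (zs : Fin (n + 1) → Z) (z : Z) (hσ : 0 ≤ σ z) :
    σ z * hEI ((μ z - Finset.univ.sup' Finset.univ_nonempty (fun i => g (zs i))) / σ z)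
      ≤ max 0 (g z - Finset.univ.sup' Finset.univ_nonempty (fun i => g (zs i)))
        + (R + 1) * σ z := by
  set ξ := Finset.univ.sup' Finset.univ_nonempty (fun i => g (zs i)) with hξ
  have herr' := herr z
  have habs : μ z - g z ≤ R * σ z := (abs_le.mp herr').2
  rcases eq_or_lt_of_le hσ with h0 | hpos
  · rw [← h0]
    simp only [zero_mul, mul_zero, add_zero]
    exact le_max_left _ _
  · set t := (μ z - ξ) / σ z with ht
    have h1 : σ z * hEI t ≤ σ z * (max t 0 + 1) :=
      mul_le_mul_of_nonneg_left (hEI_le t) hσ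
    have h2 : σ z * (max t 0 + 1) = max (μ z - ξ) 0 + σ z := by
      rw [mul_add, mul_one, mul_max_of_nonneg _ _ hσ, mul_zero, ht,
        mul_div_cancel₀ _ hpos.ne']
    have h3 : max (μ z - ξ) 0 ≤ max 0 (g z - ξ) + R * σ z := by
      have hRσ : 0 ≤ R * σ z := mul_nonneg hR hσ
      apply max_le
      · have : g z - ξ ≤ max 0 (g z - ξ) := le_max_right _ _
        linarith
      · have : (0:ℝ) ≤ max 0 (g z - ξ) := le_max_left _ _
        linarith
    calc σ z * hEI t ≤ max (μ z - ξ) 0 + σ z := by rw [← h2]; exact h1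
      _ ≤ max 0 (g z - ξ) + R * σ z + σ z := by linarith
      _ = max 0 (g z - ξ) + (R + 1) * σ z := by ring
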